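/- arXiv:1305.3447 — 2 statements merged into one kernel-verified Lean document; each statement's English description precedes it below -/
import Mathlib

section
/- Let (X,C,R) be a chemical reaction network with ℓ = t = 1 and deficiency δ = 1 such that the graph of complexes (C,R) is not strongly connected. Let h ∈ ℝ^c be a fixed vector with 0 ≠ h ∈ ker B ∩ ran I_κ and ∑_{i ∈ C''} h_i ≤ 0. Then there exists κ : R → ℝ_{>0} such that E^κ_+ ≠ ∅ if and only if ∑_{i ∈ C̃} h_i < 0 for every nonempty proper subset C̃ ⊊ C with ϱ^in(C̃) = ∅. -/
open Finset

/-- The matrix `I_κ ∈ ℝ^{c×c}` with `(I_κ)_{ji} = κ_{ij}` for `j ≠ i` and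
`(I_κ)_{ii} = −∑_{k≠i} κ_{ik}`. -/
noncomputable def Ikappa {c : ℕ} (κ : Fin c → Fin c → ℝ) : Matrix (Fin c) (Fin c) ℝ :=
  Matrix.of fun j i => if j = i then -∑ k ∈ Finset.univ.erase i, κ i k else κ i j

/-- `κ` is (the extension by zero of) a family of positive rate coefficients on `R`. -/
def ValidK {c : ℕ} (R : Finset (Fin c × Fin c)) (κ : Fin c → Fin c → ℝ) : Prop :=
  (∀ p ∈ R, 0 < κ p.1 p.2) ∧ ∀ p : Fin c × Fin c, p ∉ R → κ p.1 p.2 = 0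

/-- The monomial map `Θ : ℝ^n_{>0} → ℝ^c`, `Θ(x)_i = ∏_s x_s^{B_{si}}`. -/
noncomputable def Theta {n c : ℕ} (B : Matrix (Fin n) (Fin c) ℕ) (x : Fin n → ℝ) :
    Fin c → ℝ :=
  fun i => ∏ s, x s ^ B s i

/-- The set of positive steady states `E^κ_+` is nonempty. -/
def EposNonempty {n c : ℕ} (B : Matrix (Fin n) (Fin c) ℕ) (κ : Fin c → Fin c → ℝ) : Prop :=
  ∃ x : Fin n → ℝ, (∀ s, 0 < x s) ∧
    (B.map (Nat.cast : ℕ → ℝ)).mulVec ((Ikappa κ).mulVec (Theta B x)) = 0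

/-- The deficiency `δ = dim(ker B ∩ ran I_κ)` equals one. -/
def DeficiencyOneAt {n c : ℕ} (B : Matrix (Fin n) (Fin c) ℕ)
    (κ : Fin c → Fin c → ℝ) : Prop :=
  Module.finrank ℝ
    ↥(LinearMap.ker (Matrix.mulVecLin (B.map (Nat.cast : ℕ → ℝ))) ⊓
      LinearMap.range (Matrix.mulVecLin (Ikappa κ))) = 1

/-- Reachability (existence of a directed walk) in the directed graph with arc set `R`. -/
def Reach {c : ℕ} (R : Finset (Fin c × Fin c)) (a b : Fin c) : Prop :=
  Relation.ReflTransGen (fun x y => (x, y) ∈ R) a b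

/-- The set of arcs of `R` entering the vertex set `U`. -/
def arcsIn {c : ℕ} (R : Finset (Fin c × Fin c)) (U : Finset (Fin c)) :
    Finset (Fin c × Fin c) :=
  R.filter (fun a => a.1 ∉ U ∧ a.2 ∈ U)



open Finset

/-- divergence of a flow `g` supported on the arcs `R` -/
noncomputable def Aflow {c : ℕ} (R : Finset (Fin c × Fin c)) (g : {p // p ∈ R} → ℝ) :
    Fin c → ℝ :=
  fun j => ∑ e : {p // p ∈ R}, g e *
    ((if (e : Fin c × Fin c).2 = j then (1:ℝ) else 0) -
     (if (e : Fin c × Fin c).1 = j then (1:ℝ) else 0))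

lemma Ikappa_mulVec_eq {c : ℕ} (R : Finset (Fin c × Fin c))
    (hloop : ∀ v : Fin c, (v, v) ∉ R) (κ : Fin c → Fin c → ℝ)
    (hκ : ∀ p : Fin c × Fin c, p ∉ R → κ p.1 p.2 = 0) (v : Fin c → ℝ) :
    (Ikappa κ).mulVec v =
      Aflow R (fun e => κ (e : Fin c × Fin c).1 (e : Fin c × Fin c).2 * v (e : Fin c × Fin c).1) := by
  funext j
  have hdiag : ∀ i : Fin c, κ i i = 0 := fun i => hκ (i, i) (hloop i)
  -- RHS
  have hR : Aflow R (fun e => κ (e : Fin c × Fin c).1 (e : Fin c × Fin c).2 * v (e : Fin c × Fin c).1) j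
      = ∑ p : Fin c × Fin c, κ p.1 p.2 * v p.1 *
          ((if p.2 = j then (1:ℝ) else 0) - (if p.1 = j then (1:ℝ) else 0)) := by
    rw [Aflow]
    rw [Finset.sum_coe_sort R (fun p => κ p.1 p.2 * v p.1 *
          ((if p.2 = j then (1:ℝ) else 0) - (if p.1 = j then (1:ℝ) else 0)))]
    refine Finset.sum_subset (Finset.subset_univ R) ?_
    intro p _ hp
    rw [hκ p hp]
    ring
  rw [hR, Fintype.sum_prod_type]
  have : ∀ i : Fin c, ∑ k : Fin c, κ i k * v i *
      ((if k = j then (1:ℝ) else 0) - (if i = j then (1:ℝ) else 0))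
      = κ i j * v i - (if i = j then (∑ k : Fin c, κ i k) * v i else 0) := by
    intro i
    rw [Finset.sum_congr rfl (fun k _ => (mul_sub _ _ _))]
    rw [Finset.sum_sub_distrib]
    congr 1
    · rw [Finset.sum_congr rfl (fun k _ => by rw [mul_ite, mul_one, mul_zero]),
        Finset.sum_ite_eq' Finset.univ j (fun k => κ i k * v i), if_pos (Finset.mem_univ j)]
    · by_cases hij : i = j
      · subst hij; simp [Finset.sum_mul]
      · simp [hij]
  rw [Finset.sum_congr rfl (fun i _ => this i), Finset.sum_sub_distrib]
  rw [Finset.sum_ite_eq' Finset.univ j (fun i => (∑ k : Fin c, κ i k) * v i),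
    if_pos (Finset.mem_univ j)]
  -- LHS
  rw [Matrix.mulVec, dotProduct]
  have hL : ∀ i : Fin c, (Ikappa κ) j i * v i =
      κ i j * v i + (if i = j then -((∑ k : Fin c, κ i k) * v i) - κ i j * v i else 0) := by
    intro i
    rw [Ikappa]
    by_cases hij : i = j
    · subst hij
      simp only [if_pos rfl, Matrix.of_apply]
      rw [Finset.sum_erase_eq_sub (Finset.mem_univ i), hdiag]
      simp only [if_true]
      ring
    · simp [hij, Ne.symm hij, Matrix.of_apply]
  rw [Finset.sum_congr rfl (fun i _ => hL i), Finset.sum_add_distrib]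
  rw [Finset.sum_ite_eq' Finset.univ j
    (fun i => -((∑ k : Fin c, κ i k) * v i) - κ i j * v i), if_pos (Finset.mem_univ j)]
  rw [hdiag]
  ring

lemma Aflow_cut {c : ℕ} (R : Finset (Fin c × Fin c)) (g : {p // p ∈ R} → ℝ)
    (U : Finset (Fin c)) :
    ∑ j ∈ U, Aflow R g j = ∑ e : {p // p ∈ R}, g e *
      ((if (e : Fin c × Fin c).2 ∈ U then (1:ℝ) else 0) -
       (if (e : Fin c × Fin c).1 ∈ U then (1:ℝ) else 0)) := by
  simp only [Aflow]
  rw [Finset.sum_comm]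
  refine Finset.sum_congr rfl (fun e _ => ?_)
  rw [← Finset.mul_sum, Finset.sum_sub_distrib,
    Finset.sum_ite_eq U (e : Fin c × Fin c).2 (fun _ => (1:ℝ)),
    Finset.sum_ite_eq U (e : Fin c × Fin c).1 (fun _ => (1:ℝ))]

lemma Aflow_total {c : ℕ} (R : Finset (Fin c × Fin c)) (g : {p // p ∈ R} → ℝ) :
    ∑ j, Aflow R g j = 0 := by
  rw [Aflow_cut]
  simp

lemma Aflow_cut_noin {c : ℕ} (R : Finset (Fin c × Fin c)) (g : {p // p ∈ R} → ℝ)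
    (U : Finset (Fin c)) (hU : arcsIn R U = ∅) :
    ∑ j ∈ U, Aflow R g j =
      - ∑ e : {p // p ∈ R}, (if (e : Fin c × Fin c).1 ∈ U ∧ (e : Fin c × Fin c).2 ∉ U
        then g e else 0) := by
  rw [Aflow_cut, ← Finset.sum_neg_distrib]
  refine Finset.sum_congr rfl (fun e _ => ?_)
  have hnin : ¬((e : Fin c × Fin c).1 ∉ U ∧ (e : Fin c × Fin c).2 ∈ U) := by
    intro hc
    have : (e : Fin c × Fin c) ∈ arcsIn R U := by
      rw [arcsIn, Finset.mem_filter]; exact ⟨e.2, hc⟩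
    rw [hU] at this; exact absurd this (Finset.notMem_empty _)
  by_cases h1 : (e : Fin c × Fin c).1 ∈ U <;> by_cases h2 : (e : Fin c × Fin c).2 ∈ U <;>
    simp [h1, h2] at hnin ⊢ <;> ring_nf <;> tauto

lemma cross_undir {c : ℕ} (R : Finset (Fin c × Fin c)) (U : Finset (Fin c))
    {a b : Fin c}
    (hr : Relation.ReflTransGen (fun x y => (x, y) ∈ R ∨ (y, x) ∈ R) a b)
    (ha : a ∈ U) (hb : b ∉ U) :
    ∃ p ∈ R, (p.1 ∈ U ∧ p.2 ∉ U) ∨ (p.1 ∉ U ∧ p.2 ∈ U) := by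
  revert hb
  induction hr with
  | refl => exact fun hb => absurd ha hb
  | @tail m b' hr' step ih =>
    intro hb
    by_cases hm : m ∈ U
    · rcases step with hs | hs
      · exact ⟨(m, b'), hs, Or.inl ⟨hm, hb⟩⟩
      · exact ⟨(b', m), hs, Or.inr ⟨hb, hm⟩⟩
    · exact ih hm

lemma cross_dir {c : ℕ} (R : Finset (Fin c × Fin c)) (U : Finset (Fin c))
    {a b : Fin c}
    (hr : Relation.ReflTransGen (fun x y => (x, y) ∈ R) a b)
    (ha : a ∉ U) (hb : b ∈ U) :
    ∃ p ∈ R, p.1 ∉ U ∧ p.2 ∈ U := by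
  revert hb
  induction hr with
  | refl => exact fun hb => absurd hb ha
  | @tail m b' hr' step ih =>
    intro hb
    by_cases hm : m ∈ U
    · exact ih hm
    · exact ⟨(m, b'), step, hm, hb⟩

/-- staircase: if `y` is non-increasing along arcs, then `∑ h j * y j ≤ 0`;
 strict if `y` is non-constant. -/
lemma staircase {c : ℕ} (R : Finset (Fin c × Fin c)) (h : Fin c → ℝ)
    (hsum : ∑ i, h i = 0)
    (hlt : ∀ Ct : Finset (Fin c), Ct.Nonempty → Ct ≠ Finset.univ → arcsIn R Ct = ∅ →
        ∑ i ∈ Ct, h i < 0) :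
    ∀ N : ℕ, ∀ y : Fin c → ℝ, (Finset.univ.image y).card ≤ N →
      (∀ p ∈ R, y p.2 ≤ y p.1) →
      (∑ j, h j * y j ≤ 0 ∧ ((∃ a b : Fin c, y a ≠ y b) → ∑ j, h j * y j < 0)) := by
  intro N
  induction N with
  | zero =>
    intro y hcard _
    have : (Finset.univ.image y) = ∅ := Finset.card_eq_zero.mp (Nat.le_zero.mp hcard)
    have huniv : (Finset.univ : Finset (Fin c)) = ∅ := by
      by_contra hne
      obtain ⟨a, ha⟩ := Finset.nonempty_iff_ne_empty.mpr hne
      have : y a ∈ Finset.univ.image y := Finset.mem_image_of_mem y ha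
      simp [‹Finset.univ.image y = ∅›] at this
    constructor
    · rw [huniv]; simp
    · rintro ⟨a, -, -⟩
      have := Finset.mem_univ a; rw [huniv] at this; exact absurd this (Finset.notMem_empty a)
  | succ N ih =>
    intro y hcard hmono
    by_cases hc1 : (Finset.univ.image y).card ≤ 1
    · -- y constant (or c = 0)
      have hconst : ∀ a b : Fin c, y a = y b := by
        intro a b
        exact Finset.card_le_one.mp hc1 _ (Finset.mem_image_of_mem y (Finset.mem_univ a))
          _ (Finset.mem_image_of_mem y (Finset.mem_univ b))
      constructor
      · rcases isEmpty_or_nonempty (Fin c) with he | ⟨⟨a⟩⟩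
        · simp
        · have : ∑ j, h j * y j = (∑ j, h j) * y a := by
            rw [Finset.sum_mul]
            exact Finset.sum_congr rfl (fun j _ => by rw [hconst j a])
          rw [this, hsum, zero_mul]
      · rintro ⟨a, b, hab⟩; exact absurd (hconst a b) hab
    · push_neg at hc1
      -- at least two values
      have himne : (Finset.univ.image y).Nonempty := Finset.card_pos.mp (by omega)
      set t := (Finset.univ.image y).max' himne with ht
      have htmem : t ∈ Finset.univ.image y := Finset.max'_mem _ _
      have hle : ∀ j, y j ≤ t := fun j =>
        Finset.le_max' _ _ (Finset.mem_image_of_mem y (Finset.mem_univ j))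
      -- second largest
      have hlowne : ((Finset.univ.image y).filter (· < t)).Nonempty := by
        obtain ⟨v, hv, hvt⟩ := Finset.exists_mem_ne hc1 t
        refine ⟨v, Finset.mem_filter.mpr ⟨hv, lt_of_le_of_ne ?_ hvt⟩⟩
        exact Finset.le_max' _ _ hv
      set t' := ((Finset.univ.image y).filter (· < t)).max' hlowne with ht'
      have ht'memf := Finset.max'_mem ((Finset.univ.image y).filter (· < t)) hlowne
      rw [← ht'] at ht'memf
      have ht'lt : t' < t := (Finset.mem_filter.mp ht'memf).2
      have ht'mem : t' ∈ Finset.univ.image y := (Finset.mem_filter.mp ht'memf).1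
      have hsnd : ∀ j, y j < t → y j ≤ t' := by
        intro j hj
        refine Finset.le_max' ((Finset.univ.image y).filter (· < t)) (y j)
          (Finset.mem_filter.mpr ⟨Finset.mem_image_of_mem y (Finset.mem_univ j), hj⟩)
      set U : Finset (Fin c) := Finset.univ.filter (fun j => y j = t) with hUdef
      have hUne : U.Nonempty := by
        obtain ⟨a, -, hat⟩ := Finset.mem_image.mp htmem
        exact ⟨a, Finset.mem_filter.mpr ⟨Finset.mem_univ a, hat⟩⟩
      have hUproper : U ≠ Finset.univ := by
        obtain ⟨a, -, hat'⟩ := Finset.mem_image.mp ht'mem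
        intro hcon
        have : a ∈ U := hcon ▸ Finset.mem_univ a
        have := (Finset.mem_filter.mp this).2
        rw [hat'] at this; exact absurd this (ne_of_lt ht'lt)
      have hUnoin : arcsIn R U = ∅ := by
        rw [arcsIn, Finset.filter_eq_empty_iff]
        rintro p hp ⟨h1, h2⟩
        have hy2 : y p.2 = t := (Finset.mem_filter.mp h2).2
        have : y p.1 = t := le_antisymm (hle _) (hy2 ▸ hmono p hp)
        exact h1 (Finset.mem_filter.mpr ⟨Finset.mem_univ _, this⟩)
      -- new function
      set y' : Fin c → ℝ := fun j => min (y j) t' with hy'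
      have hy'mono : ∀ p ∈ R, y' p.2 ≤ y' p.1 := fun p hp =>
        min_le_min (hmono p hp) le_rfl
      have hy'im : (Finset.univ.image y').card ≤ N := by
        have hsub : Finset.univ.image y' ⊆ (Finset.univ.image y).erase t := by
          intro v hv
          obtain ⟨a, -, hav⟩ := Finset.mem_image.mp hv
          by_cases hat : y a = t
          · have : y' a = t' := by rw [hy']; simp only; rw [hat, min_eq_right (le_of_lt ht'lt)]
            rw [← hav, this]
            exact Finset.mem_erase.mpr ⟨ne_of_lt ht'lt, ht'mem⟩
          · have hya : y a ≤ t' := hsnd a (lt_of_le_of_ne (hle a) hat)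
            have : y' a = y a := by rw [hy']; simp only; rw [min_eq_left hya]
            rw [← hav, this]
            exact Finset.mem_erase.mpr ⟨hat, Finset.mem_image_of_mem y (Finset.mem_univ a)⟩
        calc (Finset.univ.image y').card ≤ ((Finset.univ.image y).erase t).card :=
              Finset.card_le_card hsub
          _ ≤ (Finset.univ.image y).card - 1 := le_of_eq (Finset.card_erase_of_mem htmem)
          _ ≤ N := by omega
      have hdecomp : ∑ j, h j * y j = (∑ j, h j * y' j) + (t - t') * ∑ i ∈ U, h i := by
        rw [Finset.mul_sum]
        rw [← Finset.sum_filter_add_sum_filter_not Finset.univ (fun j => y j = t)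
          (fun j => h j * y j), ← Finset.sum_filter_add_sum_filter_not Finset.univ
          (fun j => y j = t) (fun j => h j * y' j), ← hUdef]
        have e1 : ∀ j ∈ U, h j * y j = h j * y' j + (t - t') * h j := by
          intro j hj
          have hjt : y j = t := (Finset.mem_filter.mp hj).2
          have : y' j = t' := by rw [hy']; simp only; rw [hjt, min_eq_right (le_of_lt ht'lt)]
          rw [hjt, this]; ring
        have e2 : ∀ j ∈ Finset.univ.filter (fun j => ¬ y j = t), h j * y j = h j * y' j := by
          intro j hj
          have := (Finset.mem_filter.mp hj).2
          have hya : y j ≤ t' := hsnd j (lt_of_le_of_ne (hle j) this)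
          rw [hy']; simp only; rw [min_eq_left hya]
        rw [Finset.sum_congr rfl e1, Finset.sum_congr rfl e2, Finset.sum_add_distrib]
        ring
      have hUneg : ∑ i ∈ U, h i < 0 := hlt U hUne hUproper hUnoin
      have hstep : (t - t') * ∑ i ∈ U, h i < 0 :=
        mul_neg_of_pos_of_neg (by linarith) hUneg
      have hih := ih y' hy'im hy'mono
      constructor
      · linarith [hih.1]
      · intro _; linarith [hih.1]

-- extra aux lemmas
lemma Aflow_weight {c : ℕ} (R : Finset (Fin c × Fin c)) (g : {p // p ∈ R} → ℝ)
    (y : Fin c → ℝ) :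
    ∑ j, Aflow R g j * y j = ∑ e : {p // p ∈ R},
      g e * (y (e : Fin c × Fin c).2 - y (e : Fin c × Fin c).1) := by
  simp only [Aflow, Finset.sum_mul]
  rw [Finset.sum_comm]
  refine Finset.sum_congr rfl (fun e _ => ?_)
  have : ∀ j, g e * ((if (e : Fin c × Fin c).2 = j then (1:ℝ) else 0) -
      (if (e : Fin c × Fin c).1 = j then (1:ℝ) else 0)) * y j
      = g e * ((if (e : Fin c × Fin c).2 = j then y j else 0) -
        (if (e : Fin c × Fin c).1 = j then y j else 0)) := by
    intro j
    by_cases h2 : (e : Fin c × Fin c).2 = j <;> by_cases h1 : (e : Fin c × Fin c).1 = j <;>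
      simp [h1, h2] <;> ring
  rw [Finset.sum_congr rfl (fun j _ => this j)]
  rw [Finset.sum_congr rfl (fun j _ => mul_sub (g e) _ _), Finset.sum_sub_distrib,
    ← Finset.mul_sum, ← Finset.mul_sum,
    Finset.sum_ite_eq Finset.univ (e : Fin c × Fin c).2 y,
    Finset.sum_ite_eq Finset.univ (e : Fin c × Fin c).1 y]
  simp [mul_sub]

noncomputable def AflowL {c : ℕ} (R : Finset (Fin c × Fin c)) :
    ({p // p ∈ R} → ℝ) →ₗ[ℝ] (Fin c → ℝ) where
  toFun := Aflow R
  map_add' g g' := by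
    funext j; simp [Aflow, add_mul, Finset.sum_add_distrib]
  map_smul' r g := by
    funext j; simp [Aflow, Finset.mul_sum, smul_eq_mul, mul_assoc]

theorem stmt8 {n c : ℕ}
    (B : Matrix (Fin n) (Fin c) ℕ)
    (R : Finset (Fin c × Fin c)) (hloop : ∀ v : Fin c, (v, v) ∉ R)
    -- `Cp` is the vertex set `C'` of the unique absorbing strong component (`ℓ = t = 1`):
    (Cp : Finset (Fin c)) (hCpne : Cp.Nonempty)
    (hCpstrong : ∀ a ∈ Cp, ∀ b ∈ Cp, Reach R a b)
    (hCpabs : ∀ p ∈ R, p.1 ∈ Cp → p.2 ∈ Cp)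
    (hweak : ∀ a b : Fin c,
      Relation.ReflTransGen (fun x y => (x, y) ∈ R ∨ (y, x) ∈ R) a b)
    (hT1 : ∀ k : Fin c, ∃ b ∈ Cp, Reach R k b)
    (hnsc : ¬ ∀ a b : Fin c, Reach R a b)
    (hdef : ∀ κ : Fin c → Fin c → ℝ, ValidK R κ → DeficiencyOneAt B κ)
    (h : Fin c → ℝ) (hh0 : h ≠ 0)
    (hker : (B.map (Nat.cast : ℕ → ℝ)).mulVec h = 0)
    (hran : ∀ κ : Fin c → Fin c → ℝ, ValidK R κ →
      ∃ v : Fin c → ℝ, (Ikappa κ).mulVec v = h)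
    (hCpp : ∑ i ∈ Finset.univ \ Cp, h i ≤ 0) :
    (∃ κ : Fin c → Fin c → ℝ, ValidK R κ ∧ EposNonempty B κ) ↔
      ∀ Ct : Finset (Fin c), Ct.Nonempty → Ct ≠ Finset.univ → arcsIn R Ct = ∅ →
        ∑ i ∈ Ct, h i < 0 := by
  constructor
  · rintro ⟨κ, hκ, x, hx, hsteady⟩
    intro Ct hCtne hCtuniv hCtnoin
    have hΘ : ∀ i, 0 < Theta B x i := fun i => Finset.prod_pos (fun s _ => pow_pos (hx s) _)
    set gθ : {p // p ∈ R} → ℝ :=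
      fun e => κ (e : Fin c × Fin c).1 (e : Fin c × Fin c).2 *
        Theta B x (e : Fin c × Fin c).1 with hgθ
    have hgpos : ∀ e, 0 < gθ e := fun e => mul_pos (hκ.1 e.1 e.2) (hΘ _)
    have hw : (Ikappa κ).mulVec (Theta B x) = Aflow R gθ :=
      Ikappa_mulVec_eq R hloop κ hκ.2 _
    -- the steady-state flux is a multiple of h
    set W := LinearMap.ker (Matrix.mulVecLin (B.map (Nat.cast : ℕ → ℝ))) ⊓
        LinearMap.range (Matrix.mulVecLin (Ikappa κ)) with hWdef
    have hwW : (Ikappa κ).mulVec (Theta B x) ∈ W := by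
      refine Submodule.mem_inf.mpr ⟨?_, ?_⟩
      · rw [LinearMap.mem_ker, Matrix.mulVecLin_apply]; exact hsteady
      · exact ⟨Theta B x, Matrix.mulVecLin_apply _ _⟩
    have hhW : h ∈ W := by
      refine Submodule.mem_inf.mpr ⟨?_, ?_⟩
      · rw [LinearMap.mem_ker, Matrix.mulVecLin_apply]; exact hker
      · obtain ⟨v, hv⟩ := hran κ hκ
        exact ⟨v, by rw [Matrix.mulVecLin_apply]; exact hv⟩
    have hrk : Module.finrank ℝ ↥W = 1 := hdef κ hκ
    have hhne : (⟨h, hhW⟩ : W) ≠ 0 := by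
      intro hcon
      exact hh0 (congrArg Subtype.val hcon)
    obtain ⟨lam, hlam⟩ := (finrank_eq_one_iff_of_nonzero' (⟨h, hhW⟩ : W) hhne).mp hrk
      ⟨(Ikappa κ).mulVec (Theta B x), hwW⟩
    have hlam' : lam • h = (Ikappa κ).mulVec (Theta B x) := congrArg Subtype.val hlam
    -- a helper for cut sums
    have hcutsum : ∀ U : Finset (Fin c), arcsIn R U = ∅ →
        (∃ p ∈ R, p.1 ∈ U ∧ p.2 ∉ U) → lam * ∑ i ∈ U, h i < 0 := by
      intro U hUnoin ⟨p, hpR, hp1, hp2⟩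
      have hsum : ∑ j ∈ U, Aflow R gθ j = - ∑ e : {p // p ∈ R},
          (if (e : Fin c × Fin c).1 ∈ U ∧ (e : Fin c × Fin c).2 ∉ U then gθ e else 0) :=
        Aflow_cut_noin R gθ U hUnoin
      have hterm : ∀ e : {p // p ∈ R},
          0 ≤ (if (e : Fin c × Fin c).1 ∈ U ∧ (e : Fin c × Fin c).2 ∉ U then gθ e else 0) := by
        intro e
        by_cases hc : (e : Fin c × Fin c).1 ∈ U ∧ (e : Fin c × Fin c).2 ∉ U
        · rw [if_pos hc]; exact le_of_lt (hgpos e)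
        · rw [if_neg hc]
      have hsingle : gθ ⟨p, hpR⟩ ≤ ∑ e : {p // p ∈ R},
          (if (e : Fin c × Fin c).1 ∈ U ∧ (e : Fin c × Fin c).2 ∉ U then gθ e else 0) := by
        have := Finset.single_le_sum (f := fun e : {p // p ∈ R} =>
          (if (e : Fin c × Fin c).1 ∈ U ∧ (e : Fin c × Fin c).2 ∉ U then gθ e else 0))
          (fun e _ => hterm e) (Finset.mem_univ ⟨p, hpR⟩)
        simpa [hp1, hp2] using this
      have hneg : ∑ j ∈ U, Aflow R gθ j < 0 := by
        rw [hsum]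
        have := lt_of_lt_of_le (hgpos ⟨p, hpR⟩) hsingle
        linarith
      have heq : ∑ j ∈ U, Aflow R gθ j = lam * ∑ i ∈ U, h i := by
        rw [← hw, ← hlam', Finset.mul_sum]
        exact Finset.sum_congr rfl (fun j _ => rfl)
      linarith [heq ▸ hneg]
    -- Cp is proper
    have hCpuniv : Cp ≠ Finset.univ := by
      intro hcon
      exact hnsc (fun a b => hCpstrong a (by rw [hcon]; exact Finset.mem_univ a) b
        (by rw [hcon]; exact Finset.mem_univ b))
    obtain ⟨k, hk⟩ : ∃ k : Fin c, k ∉ Cp := by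
      by_contra hcon
      push_neg at hcon
      exact hCpuniv (Finset.eq_univ_iff_forall.mpr hcon)
    -- U0 := univ \ Cp
    have hU0noin : arcsIn R (Finset.univ \ Cp) = ∅ := by
      rw [arcsIn, Finset.filter_eq_empty_iff]
      rintro p hp ⟨h1, h2⟩
      rw [Finset.mem_sdiff] at h2
      have h1' : p.1 ∈ Cp := by
        by_contra hcon
        exact h1 (Finset.mem_sdiff.mpr ⟨Finset.mem_univ _, hcon⟩)
      exact h2.2 (hCpabs p hp h1')
    have hU0cross : ∃ p ∈ R, p.1 ∈ Finset.univ \ Cp ∧ p.2 ∉ Finset.univ \ Cp := by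
      obtain ⟨b, hb, hreach⟩ := hT1 k
      obtain ⟨p, hpR, hp1, hp2⟩ := cross_dir R Cp hreach hk hb
      exact ⟨p, hpR, Finset.mem_sdiff.mpr ⟨Finset.mem_univ _, hp1⟩,
        fun hc => (Finset.mem_sdiff.mp hc).2 hp2⟩
    have hlam0 : lam * ∑ i ∈ Finset.univ \ Cp, h i < 0 :=
      hcutsum (Finset.univ \ Cp) hU0noin hU0cross
    have hlampos : 0 < lam := by
      rcases le_or_gt lam 0 with hle | hpos
      · nlinarith
      · exact hpos
    -- now Ct
    obtain ⟨a, ha⟩ := hCtne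
    obtain ⟨b, hb⟩ : ∃ b : Fin c, b ∉ Ct := by
      by_contra hcon
      push_neg at hcon
      exact hCtuniv (Finset.eq_univ_iff_forall.mpr hcon)
    have hCtcross : ∃ p ∈ R, p.1 ∈ Ct ∧ p.2 ∉ Ct := by
      obtain ⟨p, hpR, hcr⟩ := cross_undir R Ct (hweak a b) ha hb
      rcases hcr with hcr | hcr
      · exact ⟨p, hpR, hcr⟩
      · exfalso
        have : p ∈ arcsIn R Ct := by
          rw [arcsIn, Finset.mem_filter]; exact ⟨hpR, hcr⟩
        rw [hCtnoin] at this
        exact Finset.notMem_empty _ this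
    have := hcutsum Ct hCtnoin hCtcross
    nlinarith
  · intro hlt
    classical
    -- h is the divergence of some (not nec. positive) flow
    set κ0 : Fin c → Fin c → ℝ := fun i j => if (i, j) ∈ R then (1:ℝ) else 0 with hκ0def
    have hκ0 : ValidK R κ0 := by
      constructor
      · intro p hp
        have : ((p.1, p.2) : Fin c × Fin c) = p := rfl
        simp only [hκ0def, this, if_pos hp]
        norm_num
      · intro p hp
        have : ((p.1, p.2) : Fin c × Fin c) = p := rfl
        simp only [hκ0def, this, if_neg hp]
    have hmemh : h ∈ LinearMap.range (AflowL R) := by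
      obtain ⟨v, hv⟩ := hran κ0 hκ0
      rw [Ikappa_mulVec_eq R hloop κ0 hκ0.2 v] at hv
      exact ⟨_, hv⟩
    have hsum : ∑ i, h i = 0 := by
      obtain ⟨g0, hg0⟩ := hmemh
      have : (AflowL R) g0 = Aflow R g0 := rfl
      rw [← hg0, this, Aflow_total]
    set W := LinearMap.range (AflowL R) with hWdef
    set Ac : ({p // p ∈ R} → ℝ) →L[ℝ] ↥W :=
      LinearMap.toContinuousLinearMap ((AflowL R).rangeRestrict) with hAc
    have hAcval : ∀ g : {p // p ∈ R} → ℝ, ((Ac g : ↥W) : Fin c → ℝ) = Aflow R g :=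
      fun g => rfl
    set pos : Set ({p // p ∈ R} → ℝ) := {g | ∀ e, 0 < g e} with hposdef
    by_cases hmem : (⟨h, hmemh⟩ : ↥W) ∈ Ac '' pos
    · -- extract the positive flow and build κ
      obtain ⟨g, hgpos, hg⟩ := hmem
      have hgh : Aflow R g = h := by
        have := congrArg Subtype.val hg
        rwa [hAcval] at this
      set κ1 : Fin c → Fin c → ℝ :=
        fun i j => if hp : (i, j) ∈ R then g ⟨(i, j), hp⟩ else 0 with hκ1def
      have hκ1off : ∀ p : Fin c × Fin c, p ∉ R → κ1 p.1 p.2 = 0 := by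
        intro p hp
        simp only [hκ1def, Prod.mk.eta, dif_neg hp]
      refine ⟨κ1, ⟨?_, hκ1off⟩, ?_⟩
      · intro p hp
        simp only [hκ1def, Prod.mk.eta, dif_pos hp]
        exact hgpos ⟨p, hp⟩
      · refine ⟨fun _ => 1, fun s => one_pos, ?_⟩
        have hΘ1 : Theta B (fun _ => (1:ℝ)) = fun _ => 1 := by
          funext i; simp [Theta]
        rw [Ikappa_mulVec_eq R hloop κ1 hκ1off (Theta B fun _ => 1)]
        have hflow : (fun e : {p // p ∈ R} =>
            κ1 (e : Fin c × Fin c).1 (e : Fin c × Fin c).2 *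
              Theta B (fun _ => (1:ℝ)) (e : Fin c × Fin c).1) = g := by
          funext e
          rw [hΘ1]
          simp only [hκ1def, Prod.mk.eta, dif_pos e.prop, Subtype.coe_eta, mul_one]
        rw [hflow, hgh]
        exact hker
    · -- separation: contradiction
      exfalso
      have hposopen : IsOpen pos := by
        have : pos = ⋂ e : {p // p ∈ R}, {g : {p // p ∈ R} → ℝ | 0 < g e} := by
          ext g; simp [hposdef]
        rw [this]
        exact isOpen_iInter_of_finite
          (fun e => isOpen_lt continuous_const (continuous_apply e))
      have hposconv : Convex ℝ pos := by
        intro g hg g' hg' a b ha hb hab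
        intro e
        simp only [Pi.add_apply, Pi.smul_apply, smul_eq_mul]
        rcases eq_or_lt_of_le ha with ha0 | ha0
        · have hb1 : b = 1 := by linarith
          rw [← ha0, hb1]
          simpa using hg' e
        · rcases eq_or_lt_of_le hb with hb0 | hb0
          · have ha1 : a = 1 := by linarith
            rw [← hb0, ha1]
            simpa using hg e
          · exact add_pos (mul_pos ha0 (hg e)) (mul_pos hb0 (hg' e))
      have hsurj : Function.Surjective Ac := (AflowL R).surjective_rangeRestrict
      have hopen : IsOpen (Ac '' pos) :=
        (ContinuousLinearMap.isOpenMap Ac hsurj) pos hposopen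
      have hconv : Convex ℝ (Ac '' pos) := hposconv.linear_image Ac.toLinearMap
      obtain ⟨f, hf⟩ := geometric_hahn_banach_open_point hconv hopen hmem
      -- extend f to the ambient space
      obtain ⟨F1, hF1⟩ := LinearMap.exists_extend (f.toLinearMap)
      set y : Fin c → ℝ := fun j => F1 (fun k => if j = k then (1:ℝ) else 0) with hydef
      have hFy : ∀ v : Fin c → ℝ, F1 v = ∑ j, v j * y j := by
        intro v
        rw [LinearMap.pi_apply_eq_sum_univ F1 v]
        exact Finset.sum_congr rfl (fun j _ => by rw [smul_eq_mul])
      have hfW : ∀ w : ↥W, f w = F1 (w : Fin c → ℝ) := by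
        intro w
        have := congrFun (congrArg (fun (g : (↥W) →ₗ[ℝ] ℝ) => g.toFun) hF1) w
        simpa using this.symm
      set H := ∑ j, h j * y j with hHdef
      set wgt : {p // p ∈ R} → ℝ :=
        fun e => y (e : Fin c × Fin c).2 - y (e : Fin c × Fin c).1 with hwgt
      have h1 : ∀ g : {p // p ∈ R} → ℝ, (∀ e, 0 < g e) →
          ∑ e, g e * wgt e < H := by
        intro g hg
        have hsep := hf (Ac g) ⟨g, hg, rfl⟩
        rw [hfW (Ac g), hfW ⟨h, hmemh⟩, hAcval, hFy, hFy] at hsep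
        rwa [Aflow_weight R g y] at hsep
      -- Step A : L g ≤ 0 for positive g
      have hA : ∀ g : {p // p ∈ R} → ℝ, (∀ e, 0 < g e) → ∑ e, g e * wgt e ≤ 0 := by
        intro g hg
        by_contra hcon
        push_neg at hcon
        set L := ∑ e, g e * wgt e with hL
        set t := max 1 (H / L) with ht
        have ht1 : (1:ℝ) ≤ t := le_max_left _ _
        have htpos : 0 < t := lt_of_lt_of_le one_pos ht1
        have h2 := h1 (t • g) (fun e => by
          simpa using mul_pos htpos (hg e))
        have h3 : ∑ e, (t • g) e * wgt e = t * L := by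
          rw [hL, Finset.mul_sum]
          exact Finset.sum_congr rfl (fun e _ => by simp [smul_eq_mul]; ring)
        rw [h3] at h2
        have h4 : H / L ≤ t := le_max_right _ _
        have h5 : H ≤ t * L := by
          rw [div_le_iff₀ hcon] at h4
          linarith
        linarith
      -- Step B : every weight is ≤ 0
      have hB : ∀ e : {p // p ∈ R}, wgt e ≤ 0 := by
        intro e0
        by_contra hcon
        push_neg at hcon
        set L1 := ∑ e, (1:ℝ) * wgt e with hL1
        have hL1le : L1 ≤ 0 := hA (fun _ => 1) (fun _ => one_pos)
        set T := (1 - L1) / wgt e0 with hT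
        have hTpos : 0 < T := div_pos (by linarith) hcon
        have hg : ∀ e : {p // p ∈ R}, 0 < (1:ℝ) + (if e = e0 then T else 0) := by
          intro e
          by_cases he : e = e0
          · rw [if_pos he]; linarith
          · rw [if_neg he]; norm_num
        have h2 := hA (fun e => 1 + (if e = e0 then T else 0)) hg
        have h3 : ∑ e, ((1:ℝ) + (if e = e0 then T else 0)) * wgt e
            = L1 + T * wgt e0 := by
          rw [hL1]
          rw [Finset.sum_congr rfl (fun e _ => (add_mul _ _ (wgt e)))]
          rw [Finset.sum_add_distrib]
          congr 1
          have : ∀ e : {p // p ∈ R}, (if e = e0 then T else 0) * wgt e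
              = (if e = e0 then T * wgt e else 0) := by
            intro e; by_cases he : e = e0 <;> simp [he]
          rw [Finset.sum_congr rfl (fun e _ => this e)]
          rw [Finset.sum_ite_eq' Finset.univ e0 (fun e => T * wgt e)]
          rw [if_pos (Finset.mem_univ e0)]
        rw [h3] at h2
        have h4 : T * wgt e0 = 1 - L1 := div_mul_cancel₀ _ (ne_of_gt hcon)
        rw [h4] at h2
        linarith
      -- monotonicity of y along arcs
      have hmono : ∀ p ∈ R, y p.2 ≤ y p.1 := by
        intro p hp
        have := hB ⟨p, hp⟩
        rw [hwgt] at this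
        simpa using this
      -- staircase
      have hstair := staircase R h hsum hlt (Finset.univ.image y).card y le_rfl hmono
      have hHle : H ≤ 0 := hstair.1
      -- finish
      have hL1le : ∑ e, wgt e ≤ 0 := by
        simpa using hA (fun _ => 1) (fun _ => one_pos)
      have hL1lt : ∑ e, wgt e < H := by
        simpa using h1 (fun _ => 1) (fun _ => one_pos)
      rcases eq_or_lt_of_le hL1le with hL10 | hL1neg
      · linarith
      · have hex : ∃ e : {p // p ∈ R}, wgt e < 0 := by
          by_contra hcon
          push_neg at hcon
          have : (0:ℝ) ≤ ∑ e, wgt e := Finset.sum_nonneg (fun e _ => hcon e)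
          linarith
        obtain ⟨e1, he1⟩ := hex
        have hnc : ∃ a b : Fin c, y a ≠ y b := by
          refine ⟨(e1 : Fin c × Fin c).2, (e1 : Fin c × Fin c).1, ?_⟩
          intro hcon
          rw [hwgt] at he1
          simp only at he1
          rw [hcon] at he1
          linarith
        have hHneg : H < 0 := hstair.2 hnc
        set t := H / (2 * ∑ e, wgt e) with ht
        have htpos : 0 < t := div_pos_of_neg_of_neg hHneg (by linarith)
        have h2 : t * (∑ e, wgt e) < H := by
          rw [Finset.mul_sum]
          simpa using h1 (fun _ => t) (fun _ => htpos)
        have hS : (∑ e, wgt e) ≠ 0 := ne_of_lt hL1neg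
        have h4 : t * (∑ e, wgt e) = H / 2 := by
          rw [ht, ← div_div, div_mul_cancel₀ _ hS]
        linarith
end

section
/- Let (C,R) be a directed graph with ℓ = t = 1 that is not strongly connected and has |C'| = 1, and for i ∈ C'' let U(i) = {k ∈ C : every directed path from k to C' traverses i}. Then for all i, i' ∈ C'': (a) i ∈ U(i); (b) if i' ∈ U(i)\{i} then U(i') ⊆ U(i)\{i}; (c) if i ≠ i' then U(i) ⊊ U(i') or U(i) ⊋ U(i') or U(i) ∩ U(i') = ∅; and (d) every arc of R leaving U(i) has tail i, i.e., ϱ^out(U(i)) ⊆ ϱ^out({i}). -/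
open Finset

/-- `p` is a directed path in the graph with arc set `R`. -/
def IsDipath {c : ℕ} (R : Finset (Fin c × Fin c)) (p : List (Fin c)) : Prop :=
  p ≠ [] ∧ p.Nodup ∧ p.Chain' (fun a b => (a, b) ∈ R)

/-- `p` is a directed path from `a` to `b` in the graph with arc set `R`. -/
def IsDipathFromTo {c : ℕ} (R : Finset (Fin c × Fin c)) (p : List (Fin c))
    (a b : Fin c) : Prop :=
  IsDipath R p ∧ p.head? = some a ∧ p.getLast? = some b

/-- There is a directed path from `a` to `b` all of whose intermediate steps stay in `S`
(for `a ∈ S` this says that there is a directed path from `a` to `b` with vertex set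
contained in `S`). -/
def ReachIn {c : ℕ} (R : Finset (Fin c × Fin c)) (S : Finset (Fin c))
    (a b : Fin c) : Prop :=
  Relation.ReflTransGen (fun x y => (x, y) ∈ R ∧ x ∈ S ∧ y ∈ S) a b

/-- The set of arcs of `R` leaving the vertex set `U`. -/
def arcsOut {c : ℕ} (R : Finset (Fin c × Fin c)) (U : Finset (Fin c)) :
    Finset (Fin c × Fin c) :=
  R.filter (fun a => a.1 ∈ U ∧ a.2 ∉ U)

/-- For a graph whose unique absorbing strong component is `{r}` (so `C'' = C \ {r}`),
`Uset R r i = U(i) = {k ∈ C : every directed path from k to r traverses i}`. -/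
noncomputable def Uset {c : ℕ} (R : Finset (Fin c × Fin c)) (r i : Fin c) :
    Finset (Fin c) :=
  @Finset.filter _ (fun k => ∀ p : List (Fin c), IsDipathFromTo R p k r → i ∈ p)
    (Classical.decPred _) Finset.univ

/-- `U ∈ C''_{j-inarb}`: `U ⊆ C'' = C \ {r}`, every vertex of `U` has a directed path to
`j` with vertex set contained in `U`, and every vertex of `C'' \ U` has a directed path
to `C' = {r}` with vertex set contained in `C \ U`. -/
def Jinarb {c : ℕ} (R : Finset (Fin c × Fin c)) (r j : Fin c)
    (U : Finset (Fin c)) : Prop :=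
  U ⊆ Finset.univ.erase r ∧
    (∀ i' ∈ U, ReachIn R U i' j) ∧
    (∀ i' ∈ Finset.univ.erase r \ U, ReachIn R (Finset.univ \ U) i' r)

/-- The vertex set of the strong component of the graph containing `j`. -/
noncomputable def SCC {c : ℕ} (R : Finset (Fin c × Fin c)) (j : Fin c) :
    Finset (Fin c) :=
  @Finset.filter _ (fun k => Reach R j k ∧ Reach R k j) (Classical.decPred _) Finset.univ

/-- `I` is a subset of `C'' = C \ {r}` such that the sets `U(i)`, `i ∈ I`, are pairwise
disjoint with union `U`. -/
def IsPartitionInto {c : ℕ} (R : Finset (Fin c × Fin c)) (r : Fin c)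
    (U I : Finset (Fin c)) : Prop :=
  I ⊆ Finset.univ.erase r ∧
    (↑I : Set (Fin c)).PairwiseDisjoint (fun i => Uset R r i) ∧
    U = I.biUnion (Uset R r)

/-- `W(j) = ⋃_{U ∈ C''_{j-inarb}} I_U`, where `I_U` is the unique subset of `C''` with
`U = ⋃*_{i ∈ I_U} U(i)` (pairwise disjoint union). -/
def Wset {c : ℕ} (R : Finset (Fin c × Fin c)) (r j : Fin c) : Set (Fin c) :=
  {i | ∃ U I : Finset (Fin c), Jinarb R r j U ∧ IsPartitionInto R r U I ∧ i ∈ I}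

/-- `U(C''(j)) = {k ∈ C'' : every directed path from k to r traverses C''(j)}`. -/
noncomputable def UsetSC {c : ℕ} (R : Finset (Fin c × Fin c)) (r j : Fin c) :
    Finset (Fin c) :=
  @Finset.filter _
    (fun k => ∀ p : List (Fin c), IsDipathFromTo R p k r → ∃ x ∈ p, x ∈ SCC R j)
    (Classical.decPred _) (Finset.univ.erase r)


section Helpers
variable {c : ℕ} {R : Finset (Fin c × Fin c)}

lemma mem_Uset {r i k : Fin c} :
    k ∈ Uset R r i ↔ ∀ p : List (Fin c), IsDipathFromTo R p k r → i ∈ p := by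
  simp [Uset, Finset.mem_filter]

/-- Extract a (nodup) path from a walk, with vertices among those of the walk. -/
lemma extract_path : ∀ (n : ℕ) (p : List (Fin c)), p.length ≤ n →
    p.Chain' (fun x y => (x, y) ∈ R) → ∀ a b, p.head? = some a → p.getLast? = some b →
    ∃ q, IsDipathFromTo R q a b ∧ ∀ x ∈ q, x ∈ p := by
  intro n
  induction n with
  | zero =>
    intro p hl _ a b ha _
    have : p = [] := List.length_eq_zero_iff.mp (Nat.le_zero.mp hl)
    subst this; simp at ha
  | succ n ih =>
    intro p hl hch a b ha hb
    obtain ⟨x, t, rfl⟩ : ∃ x t, p = x :: t := by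
      cases p
      · simp at ha
      · exact ⟨_, _, rfl⟩
    obtain rfl : a = x := (by simpa using ha : x = a).symm
    by_cases hat : a ∈ t
    · obtain ⟨s, u, rfl⟩ := List.append_of_mem hat
      have he : a :: (s ++ a :: u) = (a :: s) ++ (a :: u) := by simp
      have hsuf : (a :: u) <:+ a :: (s ++ a :: u) := by
        rw [he]; exact List.suffix_append _ _
      have hlen : (a :: u).length ≤ n := by
        simp only [List.length_cons, List.length_append] at hl ⊢; omega
      have hlast : (a :: u).getLast? = some b := by
        rw [← hb, he, List.getLast?_append_of_ne_nil _ (List.cons_ne_nil _ _)]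
      obtain ⟨q, hq, hsub⟩ := ih (a :: u) hlen (hch.suffix hsuf) a b rfl hlast
      exact ⟨q, hq, fun x hx => hsuf.subset (hsub x hx)⟩
    · rcases t with _ | ⟨y, t'⟩
      · have hba : b = a := by simpa using hb.symm
        subst hba
        exact ⟨[b], ⟨⟨List.cons_ne_nil _ _, List.nodup_singleton _,
          List.isChain_singleton _⟩, rfl, rfl⟩, fun x hx => hx⟩
      · have hlen : (y :: t').length ≤ n := by simp at hl ⊢; omega
        have hlast : (y :: t').getLast? = some b := by
          rw [← hb, List.getLast?_cons_cons]
        have hch' : (y :: t').Chain' (fun x y => (x, y) ∈ R) :=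
          (List.isChain_cons_cons.mp hch).2
        obtain ⟨q, hq, hsub⟩ := ih (y :: t') hlen hch' y b rfl hlast
        have haq : a ∉ q := fun h => hat (hsub a h)
        have hqne : q ≠ [] := hq.1.1
        refine ⟨a :: q, ⟨⟨List.cons_ne_nil _ _, List.nodup_cons.mpr ⟨haq, hq.1.2.1⟩, ?_⟩,
          rfl, ?_⟩, ?_⟩
        · refine List.isChain_cons.mpr ⟨?_, hq.1.2.2⟩
          intro z hz
          rw [hq.2.1] at hz
          simp only [Option.mem_def, Option.some.injEq] at hz
          subst hz
          exact (List.isChain_cons_cons.mp hch).1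
        · rcases q with _ | ⟨w, q'⟩
          · exact absurd rfl hqne
          · rw [List.getLast?_cons_cons, ← hq.2.2]
        · intro x hx
          rcases List.mem_cons.mp hx with h | h
          · simp [h]
          · exact List.mem_cons_of_mem _ (hsub x h)

lemma walk_of_rtg {a b : Fin c} (h : Relation.ReflTransGen (fun x y => (x, y) ∈ R) a b) :
    ∃ p : List (Fin c), p ≠ [] ∧ p.Chain' (fun x y => (x, y) ∈ R) ∧
      p.head? = some a ∧ p.getLast? = some b := by
  induction h with
  | refl => exact ⟨[a], List.cons_ne_nil _ _, List.isChain_singleton _, rfl, rfl⟩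
  | @tail x y hax hxy ihh =>
    obtain ⟨p, h1, h2, h3, h4⟩ := ihh
    refine ⟨p ++ [y], by simp, ?_, ?_, ?_⟩
    · refine h2.append (List.isChain_singleton _) ?_
      intro u hu v hv
      simp only [List.head?_cons, Option.mem_def, Option.some.injEq] at hv
      subst hv
      rw [h4] at hu
      simp only [Option.mem_def, Option.some.injEq] at hu
      subst hu; exact hxy
    · rw [List.head?_append_of_ne_nil _ h1, h3]
    · rw [List.getLast?_append_of_ne_nil _ (List.cons_ne_nil _ _)]; rfl

lemma exists_dipath {a b : Fin c} (h : Reach R a b) :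
    ∃ p, IsDipathFromTo R p a b := by
  obtain ⟨p, h1, h2, h3, h4⟩ := walk_of_rtg h
  obtain ⟨q, hq, _⟩ := extract_path p.length p le_rfl h2 a b h3 h4
  exact ⟨q, hq⟩

/-- A suffix of a dipath is a dipath. -/
lemma suffix_dipath {p s t : List (Fin c)} {k r x : Fin c}
    (hp : IsDipathFromTo R p k r) (hsplit : p = s ++ x :: t) :
    IsDipathFromTo R (x :: t) x r := by
  subst hsplit
  have hnd : (x :: t).Nodup := (List.nodup_append.mp hp.1.2.1).2.1
  refine ⟨⟨List.cons_ne_nil _ _, hnd,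
    hp.1.2.2.suffix (List.suffix_append s (x :: t))⟩, rfl, ?_⟩
  rw [← List.getLast?_append_cons s x t]
  exact hp.2.2

/-- If some dipath `p` from `k` to `r` passes `i` strictly before `i'`, and every
dipath from `k` to `r` contains `i'`, then `i ∈ U(i')`. -/
lemma mem_Uset_of_before {r k i i' : Fin c} (hk : k ∈ Uset R r i')
    {s t : List (Fin c)} (hp : IsDipathFromTo R (s ++ i :: t) k r) (hi' : i' ∈ t) :
    i ∈ Uset R r i' := by
  rw [mem_Uset]
  intro q hq
  have hqne : q ≠ [] := hq.1.1
  have hqh : q.head? = some i := hq.2.1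
  have hch : (s ++ q).Chain' (fun x y => (x, y) ∈ R) := by
    refine (hp.1.2.2.prefix (List.prefix_append s (i :: t))).append hq.1.2.2 ?_
    intro u hu v hv
    rw [hqh] at hv
    simp only [Option.mem_def, Option.some.injEq] at hv
    subst hv
    exact (List.isChain_append.mp hp.1.2.2).2.2 u hu i rfl
  have hhd : (s ++ q).head? = some k := by
    rcases s with _ | ⟨w, s'⟩
    · have : k = i := by simpa using hp.2.1.symm
      simp [this, hqh]
    · have hw : w = k := by simpa using hp.2.1
      rw [List.head?_append_of_ne_nil _ (List.cons_ne_nil _ _)]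
      simp [hw]
  have hlast : (s ++ q).getLast? = some r := by
    rw [List.getLast?_append_of_ne_nil _ hqne, hq.2.2]
  obtain ⟨p', hp', hsub⟩ := extract_path _ _ le_rfl hch k r hhd hlast
  have hi'p' : i' ∈ p' := mem_Uset.mp hk p' hp'
  rcases List.mem_append.mp (hsub _ hi'p') with h | h
  · exact ((List.nodup_append'.mp hp.1.2.1).2.2 h (List.mem_cons_of_mem _ hi')).elim
  · exact h

/-- (a): `i ∈ U(i)` (trivially: `i` is the head of any dipath from `i`). -/
lemma self_mem_Uset {r i : Fin c} : i ∈ Uset R r i := by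
  rw [mem_Uset]
  intro p hp
  exact List.mem_of_mem_head? hp.2.1

/-- Every dipath from `i` to `r` avoids `i'`, provided `i' ∈ U(i)`, `i' ≠ i`. -/
lemma not_mem_of_dipath_from {r i i' : Fin c} (hmem : i' ∈ Uset R r i) (hne : i' ≠ i)
    {p : List (Fin c)} (hp : IsDipathFromTo R p i r) : i' ∉ p := by
  intro hip
  obtain ⟨x, t, rfl⟩ : ∃ x t, p = x :: t := by
    cases p
    · exact absurd rfl hp.1.1
    · exact ⟨_, _, rfl⟩
  obtain rfl : i = x := (by simpa using hp.2.1 : x = i).symm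
  have hi't : i' ∈ t := by
    rcases List.mem_cons.mp hip with h | h
    · exact (hne h).elim
    · exact h
  obtain ⟨s', u, rfl⟩ := List.append_of_mem hi't
  have hsfx : IsDipathFromTo R (i' :: u) i' r :=
    suffix_dipath hp (by rw [List.cons_append])
  have hii'u : i ∈ i' :: u := mem_Uset.mp hmem _ hsfx
  have hnd := hp.1.2.1
  rcases List.mem_cons.mp hii'u with h | h
  · exact hne h.symm
  · exact (List.nodup_cons.mp hnd).1 (by
      exact List.mem_append.mpr (Or.inr (List.mem_cons_of_mem _ h)))

/-- (b) as a lemma. -/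
lemma Uset_subset_erase {r i i' : Fin c} (hreach : ∀ k : Fin c, Reach R k r)
    (hmem : i' ∈ Uset R r i) (hne : i' ≠ i) :
    Uset R r i' ⊆ (Uset R r i).erase i := by
  intro k hk
  obtain ⟨q, hq⟩ := exists_dipath (hreach i)
  have hqi' : i' ∉ q := not_mem_of_dipath_from hmem hne hq
  rw [Finset.mem_erase]
  constructor
  · rintro rfl
    exact hqi' (mem_Uset.mp hk q hq)
  · rw [mem_Uset]
    intro p hp
    have hi'p : i' ∈ p := mem_Uset.mp hk p hp
    obtain ⟨s', u, rfl⟩ := List.append_of_mem hi'p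
    have hsfx : IsDipathFromTo R (i' :: u) i' r := suffix_dipath hp rfl
    have : i ∈ i' :: u := mem_Uset.mp hmem _ hsfx
    exact List.mem_append.mpr (Or.inr this)

end Helpers

theorem stmt11 {c : ℕ}
    (R : Finset (Fin c × Fin c)) (hloop : ∀ v : Fin c, (v, v) ∉ R)
    -- `{r} = C'` is the vertex set of the unique absorbing strong component (`ℓ = t = 1`):
    (r : Fin c)
    (habs : ∀ p ∈ R, p.1 ≠ r)
    (hreach : ∀ k : Fin c, Reach R k r)
    (hweak : ∀ a b : Fin c,
      Relation.ReflTransGen (fun x y => (x, y) ∈ R ∨ (y, x) ∈ R) a b)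
    (hnsc : ¬ ∀ a b : Fin c, Reach R a b)
    :
    (∀ i : Fin c, i ≠ r → i ∈ Uset R r i) ∧
    (∀ i i' : Fin c, i ≠ r → i' ≠ r → i' ∈ Uset R r i → i' ≠ i →
      Uset R r i' ⊆ (Uset R r i).erase i) ∧
    (∀ i i' : Fin c, i ≠ r → i' ≠ r → i ≠ i' →
      Uset R r i ⊂ Uset R r i' ∨ Uset R r i' ⊂ Uset R r i ∨
        Uset R r i ∩ Uset R r i' = ∅) ∧
    (∀ i : Fin c, i ≠ r → arcsOut R (Uset R r i) ⊆ arcsOut R {i}) := by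
  refine ⟨fun i _ => self_mem_Uset, fun i i' _ _ hmem hne => Uset_subset_erase hreach hmem hne,
    ?_, ?_⟩
  · -- (c)
    intro i i' hi hi' hne
    by_cases hint : Uset R r i ∩ Uset R r i' = ∅
    · exact Or.inr (Or.inr hint)
    · obtain ⟨k, hk⟩ := Finset.nonempty_iff_ne_empty.mpr hint
      rw [Finset.mem_inter] at hk
      obtain ⟨p, hp⟩ := exists_dipath (hreach k)
      have hip : i ∈ p := mem_Uset.mp hk.1 p hp
      obtain ⟨s, t, rfl⟩ := List.append_of_mem hip
      have hi'p : i' ∈ s ++ i :: t := mem_Uset.mp hk.2 _ hp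
      rcases List.mem_append.mp hi'p with h | h
      · -- i' before i: i' ∈ U(i), so U(i') ⊊ U(i)
        obtain ⟨s1, s2, rfl⟩ := List.append_of_mem h
        have hp' : IsDipathFromTo R (s1 ++ i' :: (s2 ++ i :: t)) k r := by
          simpa using hp
        have hii : i ∈ s2 ++ i :: t := List.mem_append.mpr (Or.inr List.mem_cons_self)
        have hmem : i' ∈ Uset R r i := mem_Uset_of_before hk.1 hp' hii
        refine Or.inr (Or.inl ?_)
        refine Finset.ssubset_iff_of_subset
          ((Uset_subset_erase hreach hmem hne.symm).trans (Finset.erase_subset _ _)) |>.mpr ?_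
        exact ⟨i, self_mem_Uset, fun hc =>
          (Finset.mem_erase.mp (Uset_subset_erase hreach hmem hne.symm hc)).1 rfl⟩
      · have hit : i' ∈ t := by
          rcases List.mem_cons.mp h with h' | h'
          · exact (hne h'.symm).elim
          · exact h'
        have hmem : i ∈ Uset R r i' := mem_Uset_of_before hk.2 hp hit
        refine Or.inl ?_
        refine Finset.ssubset_iff_of_subset
          ((Uset_subset_erase hreach hmem hne).trans (Finset.erase_subset _ _)) |>.mpr ?_
        exact ⟨i', self_mem_Uset, fun hc =>
          (Finset.mem_erase.mp (Uset_subset_erase hreach hmem hne hc)).1 rfl⟩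
  · -- (d)
    intro i hi a ha
    simp only [arcsOut, Finset.mem_filter] at ha ⊢
    obtain ⟨haR, ha1, ha2⟩ := ha
    have hb2 : a.2 ∉ ({i} : Finset (Fin c)) := by
      simp only [Finset.mem_singleton]
      rintro rfl
      exact ha2 self_mem_Uset
    refine ⟨haR, ?_, hb2⟩
    by_contra h1
    simp only [Finset.mem_singleton] at h1
    rw [mem_Uset] at ha2
    push_neg at ha2
    obtain ⟨q, hq, hiq⟩ := ha2
    by_cases haq : a.1 ∈ q
    · obtain ⟨s, t, rfl⟩ := List.append_of_mem haq
      have hsfx : IsDipathFromTo R (a.1 :: t) a.1 r := suffix_dipath hq rfl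
      have : i ∈ a.1 :: t := mem_Uset.mp ha1 _ hsfx
      exact hiq (List.mem_append.mpr (Or.inr this))
    · have hqne : q ≠ [] := hq.1.1
      have hpath : IsDipathFromTo R (a.1 :: q) a.1 r := by
        refine ⟨⟨List.cons_ne_nil _ _, List.nodup_cons.mpr ⟨haq, hq.1.2.1⟩, ?_⟩, rfl, ?_⟩
        · refine List.isChain_cons.mpr ⟨?_, hq.1.2.2⟩
          intro z hz
          rw [hq.2.1] at hz
          simp only [Option.mem_def, Option.some.injEq] at hz
          subst hz
          exact haR
        · rcases q with _ | ⟨w, q'⟩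
          · exact absurd rfl hqne
          · rw [List.getLast?_cons_cons, ← hq.2.2]
      have : i ∈ a.1 :: q := mem_Uset.mp ha1 _ hpath
      rcases List.mem_cons.mp this with h | h
      · exact h1 h.symm
      · exact hiq h
end
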